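/- Let C be a nonempty closed convex subset of a real normed linear space X having the strong separation property, and assume at least one of the following conditions holds: (A) X is a reflexive Banach space and Int barc(C) ≠ ∅; (B) C is locally compact; (C) there exist r > 0 and a finite-dimensional linear subspace Z ⊆ X with C ⊆ B(0; r) + Z. Then barc(C) = Int barc(C) ∪ {0}, i.e. every nonzero element of barc(C) lies in the interior of barc(C). -/

import Mathlib

open Filter Topology Pointwise

/-- The barrier cone of a set `C` in a normed space. -/
def barrierCone {X : Type*} [NormedAddCommGroup X] [NormedSpace ℝ X] (C : Set X) :
    Set (X →L[ℝ] ℝ) :=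
  {f | ∃ b : ℝ, ∀ c ∈ C, f c ≤ b}

/-- `C` and `D` are strongly separated: there is a nonzero continuous linear functional whose
supremum over `C` is strictly smaller than its infimum over `D`. -/
def StronglySeparated {X : Type*} [NormedAddCommGroup X] [NormedSpace ℝ X]
    (C D : Set X) : Prop :=
  ∃ f : X →L[ℝ] ℝ, f ≠ 0 ∧ ∃ a b : ℝ, a < b ∧ (∀ c ∈ C, f c ≤ a) ∧ ∀ d ∈ D, b ≤ f d

/-- `C` has the strong separation property: it can be strongly separated from every nonempty
closed convex set disjoint from it. -/
def StrongSepProperty {X : Type*} [NormedAddCommGroup X] [NormedSpace ℝ X]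
    (C : Set X) : Prop :=
  ∀ D : Set X, D.Nonempty → IsClosed D → Convex ℝ D → Disjoint C D → StronglySeparated C D

section Statement7Aux

open Metric NormedSpace

set_option synthInstance.maxHeartbeats 1000000
set_option maxHeartbeats 2000000

namespace Statement7Aux

variable {X : Type*} [NormedAddCommGroup X] [NormedSpace ℝ X]
lemma seg_mem {C : Set X} (hconv : Convex ℝ C) {p q : X} (hp : p ∈ C) (hq : q ∈ C)
    {μ : ℝ} (h0 : 0 ≤ μ) (h1 : μ ≤ 1) : p + μ • (q - p) ∈ C := by
  have h := hconv hp hq (by linarith : (0:ℝ) ≤ 1 - μ) h0 (by ring)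
  convert h using 1
  module


lemma recession_transfer {C : Set X} (hcl : IsClosed C) (hconv : Convex ℝ C)
    {y x d : X} (hy : ∀ t : ℝ, 0 ≤ t → y + t • d ∈ C) (hx : x ∈ C) {t : ℝ} (ht : 0 ≤ t) :
    x + t • d ∈ C := by
  have hu : ∀ k : ℕ, x + ((1/((k:ℝ)+1)) • (y - x) + t • d) ∈ C := by
    intro k
    have hk : (0:ℝ) < (k:ℝ) + 1 := by positivity
    have hq := hy (((k:ℝ)+1) * t) (by positivity)
    have hs := seg_mem hconv hx hq (μ := 1/((k:ℝ)+1)) (by positivity)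
      (by rw [div_le_one hk]; linarith)
    convert hs using 2
    match_scalars <;> field_simp
  have hlim : Tendsto (fun k : ℕ => x + ((1/((k:ℝ)+1)) • (y - x) + t • d)) atTop
      (𝓝 (x + t • d)) := by
    have h0 : Tendsto (fun k : ℕ => (1/((k:ℝ)+1)) • (y - x)) atTop (𝓝 (0:X)) := by
      have h1 := tendsto_one_div_add_atTop_nhds_zero_nat (𝕜 := ℝ)
      have := h1.smul_const (y - x)
      simpa using this
    have := (h0.add_const (t • d)).const_add x
    simpa using this
  exact hcl.mem_of_tendsto hlim (Filter.Eventually.of_forall hu)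


lemma exists_one {f : X →L[ℝ] ℝ} (hf : f ≠ 0) : ∃ u : X, f u = 1 := by
  obtain ⟨v, hv⟩ := DFunLike.ne_iff.1 hf
  have hv' : f v ≠ 0 := by simpa using hv
  exact ⟨(f v)⁻¹ • v, by simp [map_smul, inv_mul_cancel₀ hv']⟩


lemma branch1 {C : Set X} (hsep : StrongSepProperty C) {f : X →L[ℝ] ℝ} (hf0 : f ≠ 0) {s : ℝ}
    (hub : ∀ c ∈ C, f c < s) (happ : ∀ ε > (0:ℝ), ∃ c ∈ C, s - ε < f c) : False := by
  obtain ⟨u, hu⟩ := exists_one hf0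
  set D : Set X := {x | s ≤ f x} with hD
  have hDne : D.Nonempty := ⟨s • u, by simp [hD, map_smul, hu]⟩
  have hDcl : IsClosed D := isClosed_le continuous_const f.continuous
  have hDconv : Convex ℝ D := by
    intro x hx y hy a b ha hb hab
    simp only [hD, Set.mem_setOf_eq, map_add, map_smul, smul_eq_mul] at *
    have habs : a*s + b*s = s := by rw [← add_mul, hab, one_mul]
    nlinarith [mul_le_mul_of_nonneg_left hx ha, mul_le_mul_of_nonneg_left hy hb]
  have hdisj : Disjoint C D := Set.disjoint_left.2 fun c hc hcD =>
    absurd (hub c hc) (not_lt.2 hcD)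
  obtain ⟨g, hg0, a, b, hab, hga, hgb⟩ := hsep D hDne hDcl hDconv hdisj
  set δ := (b - a) / (|g u| + 1) with hδ
  have hδpos : 0 < δ := div_pos (by linarith) (by positivity)
  obtain ⟨c, hc, hcf⟩ := happ δ hδpos
  have hx : c + (s - f c) • u ∈ D := by simp [hD, map_add, map_smul, hu]
  have h1 : b ≤ g c + (s - f c) * g u := by simpa [map_add, map_smul] using hgb _ hx
  have h2 : g c ≤ a := hga c hc
  have h3 : 0 < s - f c := sub_pos.2 (hub c hc)
  have h4 : s - f c < δ := by linarith
  have h5 : (s - f c) * g u ≤ (s - f c) * |g u| :=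
    mul_le_mul_of_nonneg_left (le_abs_self _) h3.le
  have h7 : δ * (|g u| + 1) = b - a := by
    rw [hδ]; field_simp
  nlinarith [abs_nonneg (g u)]


set_option maxHeartbeats 1000000 in
lemma branch2 {C : Set X} (hcl : IsClosed C) (hconv : Convex ℝ C) (hsep : StrongSepProperty C)
    {f : X →L[ℝ] ℝ} (hf0 : f ≠ 0) {cs d : X} (hcs : cs ∈ C) (hub : ∀ c ∈ C, f c ≤ f cs)
    (hd0 : d ≠ 0) (hfd : f d = 0) (hrec : ∀ t : ℝ, 0 ≤ t → cs + t • d ∈ C) : False := by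
  obtain ⟨h', hh'1, hh'd⟩ := exists_dual_vector ℝ d (norm_ne_zero_iff.2 hd0)
  set h : X →L[ℝ] ℝ := ‖d‖⁻¹ • h' with hh
  have hnd : ‖d‖ ≠ 0 := norm_ne_zero_iff.2 hd0
  have hd1 : h d = 1 := by
    simp [hh, hh'd, inv_mul_cancel₀ hnd]
  obtain ⟨u₀, hu₀⟩ := exists_one hf0
  set u : X := u₀ - (h u₀) • d with hu
  have hfu : f u = 1 := by simp [hu, map_sub, map_smul, hfd, hu₀]
  have hhu : h u = 0 := by simp [hu, map_sub, map_smul, hd1]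
  set D : Set X := {x | ∀ l : ℝ, 0 < l → 2*l ≤ l^2 * h (x - cs) + f (x - cs)} with hD
  have hDne : D.Nonempty := by
    refine ⟨cs + (d + u), fun l hl => ?_⟩
    simp only [add_sub_cancel_left, map_add, hd1, hhu, hfd, hfu]
    nlinarith [sq_nonneg (l - 1)]
  have hDcl : IsClosed D := by
    have heq : D = ⋂ l : ℝ, {x | 0 < l → 2*l ≤ l^2 * h (x - cs) + f (x - cs)} := by
      ext x; simp [hD, Set.mem_iInter]
    rw [heq]
    refine isClosed_iInter fun l => ?_
    by_cases hl : 0 < l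
    · have : {x : X | 0 < l → 2*l ≤ l^2 * h (x - cs) + f (x - cs)}
          = {x : X | 2*l ≤ l^2 * h (x - cs) + f (x - cs)} := by ext x; simp [hl]
      rw [this]
      have hcont : Continuous fun x : X => l^2 * h (x - cs) + f (x - cs) := by
        have h1 : Continuous fun x : X => x - cs := continuous_id.sub continuous_const
        exact (continuous_const.mul (h.continuous.comp h1)).add (f.continuous.comp h1)
      exact isClosed_le continuous_const hcont
    · have : {x : X | 0 < l → 2*l ≤ l^2 * h (x - cs) + f (x - cs)} = Set.univ := by
        ext x; simp [hl]
      rw [this]; exact isClosed_univ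
  have hDconv : Convex ℝ D := by
    intro x hx y hy a b ha hb hab l hl
    have hx' := hx l hl
    have hy' := hy l hl
    have hsub : (a • x + b • y) - cs = a • (x - cs) + b • (y - cs) := by
      have : a • (x - cs) + b • (y - cs) = (a • x + b • y) - (a + b) • cs := by
        rw [smul_sub, smul_sub, add_smul]; abel
      rw [this, hab, one_smul]
    rw [hsub, map_add, map_add, map_smul, map_smul, map_smul, map_smul]
    simp only [smul_eq_mul]
    nlinarith [mul_le_mul_of_nonneg_left hx' ha, mul_le_mul_of_nonneg_left hy' hb]
  have hdisj : Disjoint C D := by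
    rw [Set.disjoint_left]
    intro x hxC hxD
    have hβ : f (x - cs) ≤ 0 := by rw [map_sub]; linarith [hub x hxC]
    set α := h (x - cs) with hα
    rcases le_or_gt α 0 with hαle | hαpos
    · have := hxD 1 one_pos
      nlinarith
    · have hl : 0 < α⁻¹ := inv_pos.2 hαpos
      have hx2 := hxD α⁻¹ hl
      have hinv : (α⁻¹)^2 * α = α⁻¹ := by field_simp
      rw [hinv] at hx2
      linarith
  obtain ⟨g, hg0, a, b, hab, hga, hgb⟩ := hsep D hDne hDcl hDconv hdisj
  set t := (|g u| + 1) / (b - a) with ht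
  have htpos : 0 < t := div_pos (by positivity) (by linarith)
  have hyt : cs + (t • d + t⁻¹ • u) ∈ D := by
    intro l hl
    simp only [add_sub_cancel_left, map_add, map_smul, smul_eq_mul, hd1, hhu, hfd, hfu]
    have key : 2*l ≤ l^2*t + t⁻¹ := by
      rw [← mul_le_mul_iff_left₀ htpos]
      have h3 : t⁻¹ * t = 1 := inv_mul_cancel₀ htpos.ne'
      have h2 : 2*l*t ≤ l^2*t^2 + 1 := by nlinarith [sq_nonneg (l*t - 1)]
      nlinarith
    nlinarith
  have h1 : g cs + t * g d ≤ a := by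
    have := hga _ (hrec t htpos.le)
    simpa [map_add, map_smul] using this
  have h2 : b ≤ g cs + (t * g d + t⁻¹ * g u) := by
    simpa [map_add, map_smul] using hgb _ hyt
  have h5 : t⁻¹ * g u ≤ t⁻¹ * |g u| :=
    mul_le_mul_of_nonneg_left (le_abs_self _) (inv_nonneg.2 htpos.le)
  have h6 : t⁻¹ * (|g u| + 1) = b - a := by
    rw [ht]
    field_simp
  nlinarith [inv_pos.2 htpos]


/-- Membership of points on the secant segment. -/
lemma secant_mem {C : Set X} (hconv : Convex ℝ C) {p q : X} (hp : p ∈ C) (hq : q ∈ C)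
    {t : ℝ} (ht : 0 ≤ t) (htle : t ≤ ‖q - p‖) :
    p + t • (‖q - p‖⁻¹ • (q - p)) ∈ C := by
  rcases eq_or_lt_of_le ht with rfl | htpos
  · simpa using hp
  have hD : 0 < ‖q - p‖ := lt_of_lt_of_le htpos htle
  rw [smul_smul]
  refine seg_mem hconv hp hq (by positivity) ?_
  rw [← div_eq_mul_inv, div_le_one hD]
  exact htle


/-- If a subsequence of secant directions converges, the limit is a recession direction. -/
lemma dir_of_subseq {C : Set X} (hcl : IsClosed C) (hconv : Convex ℝ C) {p : X} (hp : p ∈ C)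
    {c : ℕ → X} (hc : ∀ n, c n ∈ C)
    (hdist : Tendsto (fun n => ‖c n - p‖) atTop atTop)
    {d : X} {ψ : ℕ → ℕ} (hψ : StrictMono ψ)
    (hlim : Tendsto (fun m => ‖c (ψ m) - p‖⁻¹ • (c (ψ m) - p)) atTop (𝓝 d)) :
    ∀ t : ℝ, 0 ≤ t → p + t • d ∈ C := by
  intro t ht
  have h1 : Tendsto (fun m => p + t • (‖c (ψ m) - p‖⁻¹ • (c (ψ m) - p))) atTop
      (𝓝 (p + t • d)) := tendsto_const_nhds.add (hlim.const_smul t)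
  refine hcl.mem_of_tendsto h1 ?_
  have hdψ : Tendsto (fun m => ‖c (ψ m) - p‖) atTop atTop :=
    hdist.comp hψ.tendsto_atTop
  filter_upwards [hdψ.eventually_ge_atTop t] with m hm
  exact secant_mem hconv hp (hc (ψ m)) ht hm

/-- The f-values of secant directions tend to zero, given the defining estimates. -/
lemma tendsto_f_e {f : X →L[ℝ] ℝ} {s : ℝ} (p : X) {c : ℕ → X}
    (hub : ∀ n, f (c n) ≤ s)
    (hlow : ∀ n : ℕ, ((n:ℝ)+1) - ‖c n‖/((n:ℝ)+1) < f (c n))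
    (hdist : Tendsto (fun n => ‖c n - p‖) atTop atTop) :
    Tendsto (fun n => f (‖c n - p‖⁻¹ • (c n - p))) atTop (𝓝 0) := by
  set K1 := |s| + |f p| with hK1
  set K2 := ‖p‖ + |f p| with hK2
  have hinv0 : Tendsto (fun n => ‖c n - p‖⁻¹) atTop (𝓝 0) :=
    tendsto_inv_atTop_zero.comp hdist
  have hu : Tendsto (fun n => ‖c n - p‖⁻¹ * K1) atTop (𝓝 0) := by
    simpa using hinv0.mul_const K1
  have hn1 : Tendsto (fun n : ℕ => -(((n:ℝ)+1)⁻¹) + ‖c n - p‖⁻¹ * (-K2)) atTop (𝓝 0) := by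
    have h1 : Tendsto (fun n : ℕ => (((n:ℝ)+1)⁻¹)) atTop (𝓝 0) := by
      simpa [one_div] using tendsto_one_div_add_atTop_nhds_zero_nat (𝕜 := ℝ)
    have h2 := (h1.neg).add (hinv0.mul_const (-K2))
    simpa using h2
  refine tendsto_of_tendsto_of_tendsto_of_le_of_le' hn1 hu ?_ ?_
  · -- lower bound
    obtain ⟨m₀, hm₀⟩ := exists_nat_ge ‖p‖
    filter_upwards [hdist.eventually_gt_atTop 0, eventually_ge_atTop m₀] with n hD hnm
    set D := ‖c n - p‖ with hDdef
    have hnp : ‖p‖ ≤ (n:ℝ) + 1 := by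
      calc ‖p‖ ≤ (m₀ : ℝ) := hm₀
        _ ≤ (n:ℝ) := by exact_mod_cast hnm
        _ ≤ (n:ℝ) + 1 := by linarith
    have hninv : (0:ℝ) < ((n:ℝ)+1)⁻¹ := by positivity
    have hninvle : ((n:ℝ)+1)⁻¹ ≤ 1 := by
      rw [inv_le_one_iff₀]; right; linarith
    have hcn : ‖c n‖ ≤ D + ‖p‖ := by
      calc ‖c n‖ = ‖(c n - p) + p‖ := by rw [sub_add_cancel]
        _ ≤ D + ‖p‖ := norm_add_le _ _
    have hA : -(D * (((n:ℝ)+1)⁻¹)) - K2 ≤ f (c n) - f p := by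
      have h1 := hlow n
      rw [div_eq_mul_inv] at h1
      have h2 : ‖c n‖ * (((n:ℝ)+1)⁻¹) ≤ (D + ‖p‖) * (((n:ℝ)+1)⁻¹) :=
        mul_le_mul_of_nonneg_right hcn hninv.le
      have h3 : ‖p‖ * (((n:ℝ)+1)⁻¹) ≤ ‖p‖ := by
        nlinarith [norm_nonneg p]
      rw [hK2]
      have hn0 : (0:ℝ) ≤ (n:ℝ) := Nat.cast_nonneg n
      nlinarith [neg_le_abs (f p), le_abs_self (f p)]
    have heval : f (‖c n - p‖⁻¹ • (c n - p)) = D⁻¹ * (f (c n) - f p) := by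
      rw [map_smul, map_sub]; rfl
    rw [heval]
    have h5 := mul_le_mul_of_nonneg_left hA (inv_nonneg.2 hD.le)
    have h6 : D⁻¹ * (-(D * (((n:ℝ)+1)⁻¹)) - K2) = -(((n:ℝ)+1)⁻¹) + D⁻¹ * (-K2) := by
      field_simp
      ring
    rw [h6] at h5
    exact h5
  · -- upper bound
    filter_upwards [hdist.eventually_gt_atTop 0] with n hD
    set D := ‖c n - p‖ with hDdef
    have heval : f (‖c n - p‖⁻¹ • (c n - p)) = D⁻¹ * (f (c n) - f p) := by
      rw [map_smul, map_sub]; rfl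
    rw [heval]
    have hA : f (c n) - f p ≤ K1 := by
      have := hub n
      have h4 : -f p ≤ |f p| := neg_le_abs (f p)
      have h5 : s ≤ |s| := le_abs_self s
      rw [hK1]; linarith
    exact mul_le_mul_of_nonneg_left hA (inv_nonneg.2 hD.le)


/-- Condition (B): a convergent subsequence of secant directions exists. -/
lemma subseq_of_locallyCompact {C : Set X} (hconv : Convex ℝ C) {c₀ : X} (hc₀ : c₀ ∈ C)
    {r : ℝ} (hr : 0 < r) (hK : IsCompact (C ∩ closedBall c₀ r)) {c : ℕ → X}
    (hc : ∀ n, c n ∈ C) (hdist : Tendsto (fun n => ‖c n - c₀‖) atTop atTop) :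
    ∃ d : X, ‖d‖ = 1 ∧ ∃ ψ : ℕ → ℕ, StrictMono ψ ∧
      Tendsto (fun m => ‖c (ψ m) - c₀‖⁻¹ • (c (ψ m) - c₀)) atTop (𝓝 d) := by
  obtain ⟨N, hN⟩ := eventually_atTop.1 (hdist.eventually_ge_atTop (max r 1))
  set e : ℕ → X := fun n => ‖c n - c₀‖⁻¹ • (c n - c₀) with he
  have hDpos : ∀ n, N ≤ n → 0 < ‖c n - c₀‖ := fun n hn =>
    lt_of_lt_of_le (lt_of_lt_of_le zero_lt_one (le_max_right r 1)) (hN n hn)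
  have he_norm : ∀ n, N ≤ n → ‖e n‖ = 1 := by
    intro n hn
    rw [he]
    simp only [norm_smul, norm_inv, norm_norm]
    exact inv_mul_cancel₀ (hDpos n hn).ne'
  set y : ℕ → X := fun m => c₀ + r • e (m + N) with hy
  have hymem : ∀ m, y m ∈ C ∩ closedBall c₀ r := by
    intro m
    have hmN : N ≤ m + N := Nat.le_add_left N m
    constructor
    · exact secant_mem hconv hc₀ (hc (m + N)) hr.le
        (le_trans (le_max_left r 1) (hN _ hmN))
    · simp only [mem_closedBall, dist_eq_norm, hy, add_sub_cancel_left, norm_smul,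
        Real.norm_eq_abs, abs_of_pos hr]
      rw [he_norm _ hmN, mul_one]
  obtain ⟨x, hxK, φ, hφ, hφlim⟩ := hK.tendsto_subseq hymem
  have hψmono : StrictMono (fun m => φ m + N) := fun a b hab =>
    Nat.add_lt_add_right (hφ hab) N
  have heq : ∀ m, e (φ m + N) = r⁻¹ • (y (φ m) - c₀) := by
    intro m
    rw [hy]
    simp only [add_sub_cancel_left, smul_smul, inv_mul_cancel₀ hr.ne', one_smul]
  have hlim : Tendsto (fun m => e (φ m + N)) atTop (𝓝 (r⁻¹ • (x - c₀))) := by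
    have := ((hφlim.sub_const c₀).const_smul r⁻¹)
    simpa [heq] using this
  have hdn : ‖r⁻¹ • (x - c₀)‖ = 1 := by
    have h1 : Tendsto (fun m => ‖e (φ m + N)‖) atTop (𝓝 ‖r⁻¹ • (x - c₀)‖) :=
      (continuous_norm.tendsto _).comp hlim
    have h2 : (fun m => ‖e (φ m + N)‖) = fun _ => (1:ℝ) := by
      funext m; exact he_norm _ (Nat.le_add_left N (φ m))
    rw [h2] at h1
    exact (tendsto_nhds_unique tendsto_const_nhds h1).symm
  exact ⟨r⁻¹ • (x - c₀), hdn, fun m => φ m + N, hψmono, hlim⟩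

/-- Condition (C): a convergent subsequence of secant directions exists. -/
lemma subseq_of_findim {C : Set X} {r : ℝ} (hr : 0 < r) (Z : Submodule ℝ X)
    [FiniteDimensional ℝ Z] (hCZ : C ⊆ ball (0:X) r + (Z : Set X)) (p : X)
    {c : ℕ → X} (hc : ∀ n, c n ∈ C)
    (hdist : Tendsto (fun n => ‖c n - p‖) atTop atTop) :
    ∃ d : X, ‖d‖ = 1 ∧ ∃ ψ : ℕ → ℕ, StrictMono ψ ∧
      Tendsto (fun m => ‖c (ψ m) - p‖⁻¹ • (c (ψ m) - p)) atTop (𝓝 d) := by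
  have hmem : ∀ n, ∃ bn ∈ ball (0:X) r, ∃ zn ∈ (Z : Set X), bn + zn = c n := fun n =>
    Set.mem_add.1 (hCZ (hc n))
  choose bf hbf zf hzf hbzf using hmem
  have hbnorm : ∀ n, ‖bf n‖ < r := fun n => mem_ball_zero_iff.1 (hbf n)
  set e : ℕ → X := fun n => ‖c n - p‖⁻¹ • (c n - p) with he
  set v : ℕ → X := fun n => ‖zf n‖⁻¹ • zf n with hv
  -- z n = c n - b n
  have hzeq : ∀ n, zf n = (c n - p) - (bf n - p) := by
    intro n; rw [← hbzf n]; abel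
  have hzlow : ∀ n, ‖c n - p‖ - (r + ‖p‖) ≤ ‖zf n‖ := by
    intro n
    have h1 : ‖bf n - p‖ ≤ r + ‖p‖ :=
      le_trans (norm_sub_le _ _) (by linarith [hbnorm n])
    have h2 := norm_sub_norm_le (c n - p) (bf n - p)
    rw [← hzeq n] at h2
    linarith
  obtain ⟨N, hN⟩ := eventually_atTop.1 (hdist.eventually_ge_atTop (r + ‖p‖ + 1))
  have hzpos : ∀ n, N ≤ n → 1 ≤ ‖zf n‖ := fun n hn => by
    have := hzlow n; have := hN n hn; linarith
  have hDpos : ∀ n, N ≤ n → 0 < ‖c n - p‖ := fun n hn => by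
    have := hN n hn; have : (0:ℝ) ≤ ‖p‖ := norm_nonneg p; linarith [norm_nonneg p, hr]
  -- compact set
  set K : Set X := Subtype.val '' (sphere (0 : Z) 1) with hK
  have hKcomp : IsCompact K := (isCompact_sphere (0:Z) 1).image continuous_subtype_val
  have hvmem : ∀ m, v (m + N) ∈ K := by
    intro m
    have hmN : N ≤ m + N := Nat.le_add_left N m
    have hz1 : (0:ℝ) < ‖zf (m+N)‖ := lt_of_lt_of_le zero_lt_one (hzpos _ hmN)
    refine ⟨⟨v (m+N), Z.smul_mem _ (hzf (m+N))⟩, ?_, rfl⟩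
    rw [mem_sphere_zero_iff_norm]
    show ‖v (m+N)‖ = 1
    rw [hv]
    simp only [norm_smul, norm_inv, norm_norm]
    exact inv_mul_cancel₀ hz1.ne'
  obtain ⟨x, hxK, φ, hφ, hφlim⟩ := hKcomp.tendsto_subseq hvmem
  set ψ : ℕ → ℕ := fun m => φ m + N with hψ
  have hψmono : StrictMono ψ := fun a b hab => Nat.add_lt_add_right (hφ hab) N
  have hψatTop : Tendsto ψ atTop atTop := hψmono.tendsto_atTop
  -- ‖e n - v n‖ ≤ 2 (r + ‖p‖) / ‖c n - p‖
  have hbound : ∀ n, N ≤ n → ‖e n - v n‖ ≤ 2*(r + ‖p‖) / ‖c n - p‖ := by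
    intro n hn
    set D := ‖c n - p‖ with hD
    set Zn := ‖zf n‖ with hZn
    have hD0 : 0 < D := hDpos n hn
    have hZ0 : (0:ℝ) < Zn := lt_of_lt_of_le zero_lt_one (hzpos n hn)
    have hsplit : e n - v n = D⁻¹ • ((c n - p) - zf n) + (D⁻¹ - Zn⁻¹) • zf n := by
      rw [he, hv]
      simp only [smul_sub, sub_smul]
      abel
    have hbp : ‖bf n - p‖ ≤ r + ‖p‖ :=
      le_trans (norm_sub_le _ _) (by linarith [hbnorm n])
    have hcz : (c n - p) - zf n = bf n - p := by rw [hzeq n]; abel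
    have hfirst : ‖D⁻¹ • ((c n - p) - zf n)‖ ≤ (r + ‖p‖)/D := by
      rw [norm_smul, norm_inv, Real.norm_eq_abs, abs_of_pos hD0, div_eq_inv_mul, hcz]
      exact mul_le_mul_of_nonneg_left hbp (inv_nonneg.2 hD0.le)
    have hZD : |Zn - D| ≤ r + ‖p‖ := by
      have h2 := abs_norm_sub_norm_le (zf n) (c n - p)
      have h3 : zf n - (c n - p) = -(bf n - p) := by rw [hzeq n]; abel
      rw [h3, norm_neg] at h2
      exact le_trans h2 hbp
    have hsecond : ‖(D⁻¹ - Zn⁻¹) • zf n‖ ≤ (r + ‖p‖)/D := by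
      have h1 : D⁻¹ - Zn⁻¹ = (Zn - D)/(D*Zn) := by field_simp
      have habs : |D⁻¹ - Zn⁻¹| * Zn = |Zn - D| / D := by
        rw [h1, abs_div, abs_mul, abs_of_pos hD0, abs_of_pos hZ0]
        field_simp
      rw [norm_smul, Real.norm_eq_abs, ← hZn, habs]
      gcongr
    calc ‖e n - v n‖ ≤ ‖D⁻¹ • ((c n - p) - zf n)‖ + ‖(D⁻¹ - Zn⁻¹) • zf n‖ := by
          rw [hsplit]; exact norm_add_le _ _
      _ ≤ (r + ‖p‖)/D + (r + ‖p‖)/D := add_le_add hfirst hsecond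
      _ = 2*(r + ‖p‖)/D := by ring
  have hdiff0 : Tendsto (fun m => e (ψ m) - v (ψ m)) atTop (𝓝 0) := by
    apply squeeze_zero_norm'
    · filter_upwards [hψatTop.eventually (eventually_ge_atTop N)] with m hm
      exact hbound (ψ m) hm
    · exact tendsto_const_nhds.div_atTop (hdist.comp hψatTop)
  have hvlim : Tendsto (fun m => v (ψ m)) atTop (𝓝 x) := by exact hφlim
  have helim : Tendsto (fun m => e (ψ m)) atTop (𝓝 x) := by
    have := hdiff0.add hvlim
    simpa using this
  have hx1 : ‖x‖ = 1 := by
    obtain ⟨z1, hz1, rfl⟩ := hxK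
    have := mem_sphere_zero_iff_norm.1 hz1
    exact this
  exact ⟨x, hx1, ψ, hψmono, by simpa [he] using helim⟩


/-- A cluster value of a real sequence that is eventually `≤ a` is itself `≤ a`. -/
lemma clusterPt_le_of_eventually_le {u : ℕ → ℝ} {x a : ℝ} (h : MapClusterPt x atTop u)
    (hev : ∀ᶠ n in atTop, u n ≤ a) : x ≤ a := by
  by_contra hlt
  push_neg at hlt
  have hfreq := (mapClusterPt_iff_frequently.1 h) (Set.Ioi a) (Ioi_mem_nhds hlt)
  obtain ⟨n, hn1, hn2⟩ := (hfreq.and_eventually hev).exists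
  exact absurd hn2 (not_le.2 hn1)

/-- A cluster value of a convergent real sequence equals the limit. -/
lemma clusterPt_eq_of_tendsto {u : ℕ → ℝ} {x a : ℝ} (h : MapClusterPt x atTop u)
    (hconv : Tendsto u atTop (𝓝 a)) : x = a := by
  have h1 : NeBot (𝓝 x ⊓ map u atTop) := h
  have h2 : 𝓝 x ⊓ map u atTop ≤ 𝓝 x ⊓ 𝓝 a := inf_le_inf_left _ hconv
  exact eq_of_nhds_neBot (h1.mono h2)

/-- Baire category: a functional dominating a multiple of the norm on C exists whenever
the barrier cone has nonempty interior. -/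
lemma baire_step {C : Set X} {g₀ : X →L[ℝ] ℝ} {ε : ℝ} (hε : 0 < ε)
    (hball : ball g₀ ε ⊆ barrierCone C) :
    ∃ h₀ : X →L[ℝ] ℝ, ∃ ρ > (0:ℝ), ∃ Nb : ℝ, ∀ x ∈ C, h₀ x + ρ * ‖x‖ ≤ Nb := by
  set F : ℕ → Set (X →L[ℝ] ℝ) := fun n =>
    ({h : X →L[ℝ] ℝ | ∀ x ∈ C, h x ≤ n} ∩ closedBall g₀ (ε/2)) ∪ (ball g₀ (ε/2))ᶜ with hF
  have hFcl : ∀ n, IsClosed (F n) := by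
    intro n
    refine IsClosed.union (IsClosed.inter ?_ isClosed_closedBall) isOpen_ball.isClosed_compl
    have : {h : X →L[ℝ] ℝ | ∀ x ∈ C, h x ≤ n} = ⋂ x ∈ C, {h : X →L[ℝ] ℝ | h x ≤ n} := by
      ext h; simp
    rw [this]
    exact isClosed_biInter fun x _ =>
      isClosed_le ((ContinuousLinearMap.apply ℝ ℝ x).continuous) continuous_const
  have hFun : (⋃ n, F n) = Set.univ := by
    rw [Set.eq_univ_iff_forall]
    intro h
    by_cases hmem : h ∈ ball g₀ (ε/2)
    · have hbc : h ∈ barrierCone C := hball (ball_subset_ball (by linarith) hmem)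
      obtain ⟨bd, hbd⟩ := hbc
      obtain ⟨n, hn⟩ := exists_nat_ge bd
      exact Set.mem_iUnion.2 ⟨n, Or.inl ⟨fun x hx => le_trans (hbd x hx) hn,
        ball_subset_closedBall hmem⟩⟩
    · exact Set.mem_iUnion.2 ⟨0, Or.inr hmem⟩
  haveI : BaireSpace (X →L[ℝ] ℝ) := BaireSpace.of_completelyPseudoMetrizable
  have hdense := dense_iUnion_interior_of_closed hFcl hFun
  obtain ⟨h₁, hh₁mem, hh₁ball⟩ := hdense.exists_mem_open isOpen_ball
    ⟨g₀, mem_ball_self (by linarith : (0:ℝ) < ε/4)⟩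
  obtain ⟨n, hn⟩ := Set.mem_iUnion.1 hh₁mem
  obtain ⟨ρ, hρpos, hρball⟩ := Metric.isOpen_iff.1 (isOpen_interior.inter isOpen_ball) h₁
    ⟨hn, hh₁ball⟩
  have hsub : ball h₁ ρ ⊆ {h : X →L[ℝ] ℝ | ∀ x ∈ C, h x ≤ n} := by
    intro h hh
    have h2 := hρball hh
    have h3 : h ∈ F n := interior_subset h2.1
    have h4 : h ∈ ball g₀ (ε/2) := ball_subset_ball (by linarith) h2.2
    rcases h3 with h3 | h3
    · exact h3.1
    · exact absurd h4 h3
  refine ⟨h₁, ρ/2, by linarith, n, ?_⟩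
  intro x hx
  rcases eq_or_ne x 0 with rfl | hx0
  · simp [Nat.cast_nonneg]
  · obtain ⟨k₀, hk₀norm, hk₀x⟩ := exists_dual_vector ℝ x (norm_ne_zero_iff.2 hx0)
    have hkmem : h₁ + (ρ/2) • k₀ ∈ ball h₁ ρ := by
      have hns : ‖(ρ/2) • k₀‖ = ρ/2 := by
        rw [norm_smul (ρ/2) k₀, hk₀norm, mul_one, Real.norm_eq_abs, abs_of_pos (by linarith)]
      rw [mem_ball, dist_eq_norm, add_sub_cancel_left, hns]
      linarith
    have hle := hsub hkmem x hx
    have heval : (h₁ + (ρ/2) • k₀) x = h₁ x + (ρ/2) * ‖x‖ := by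
      simp only [ContinuousLinearMap.add_apply, ContinuousLinearMap.coe_smul',
        Pi.smul_apply, smul_eq_mul, hk₀x]
      norm_num
    rw [heval] at hle
    linarith [hle]

/-- Condition (A): reflexivity plus nonempty interior of the barrier cone give a
recession direction annihilated by `f`. -/
lemma dir_of_reflexive {C : Set X} (hcl : IsClosed C) (hconv : Convex ℝ C)
    (hsurj : Function.Surjective (inclusionInDoubleDual ℝ X))
    {g₀ : X →L[ℝ] ℝ} {ε : ℝ} (hε : 0 < ε) (hball : ball g₀ ε ⊆ barrierCone C)
    {f : X →L[ℝ] ℝ} {p : X} (hp : p ∈ C) {c : ℕ → X} (hc : ∀ n, c n ∈ C)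
    (hdist : Tendsto (fun n => ‖c n - p‖) atTop atTop)
    (hfe : Tendsto (fun n => f (‖c n - p‖⁻¹ • (c n - p))) atTop (𝓝 0)) :
    ∃ d : X, d ≠ 0 ∧ f d = 0 ∧ ∀ t : ℝ, 0 ≤ t → p + t • d ∈ C := by
  obtain ⟨h₀, ρ, hρ, Nb, hNb⟩ := baire_step hε hball
  set e : ℕ → X := fun n => ‖c n - p‖⁻¹ • (c n - p) with he
  -- eventual bound on h₀ (e n)
  have hh₀e : ∀ᶠ n in atTop, h₀ (e n) ≤ -(ρ/2) := by
    filter_upwards [hdist.eventually_ge_atTop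
      (max 1 ((Nb + |h₀ p| + ρ*‖p‖) / (ρ/2)))] with n hn
    set D := ‖c n - p‖ with hD
    have hD1 : (1:ℝ) ≤ D := le_trans (le_max_left _ _) hn
    have hD2 : (Nb + |h₀ p| + ρ*‖p‖)/(ρ/2) ≤ D := le_trans (le_max_right _ _) hn
    have hDpos : (0:ℝ) < D := lt_of_lt_of_le zero_lt_one hD1
    have hkey : h₀ (c n) - h₀ p ≤ (Nb + |h₀ p| + ρ*‖p‖) - ρ * D := by
      have h1 := hNb (c n) (hc n)
      have h2 : D - ‖p‖ ≤ ‖c n‖ := by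
        have := norm_sub_le (c n) p
        rw [← hD] at this
        linarith [this]
      have h3 : ρ * (D - ‖p‖) ≤ ρ * ‖c n‖ := mul_le_mul_of_nonneg_left h2 hρ.le
      have h4 : -h₀ p ≤ |h₀ p| := neg_le_abs _
      nlinarith
    have heval : h₀ (e n) = D⁻¹ * (h₀ (c n) - h₀ p) := by
      rw [he]; simp only [map_smul, map_sub]; rfl
    rw [heval]
    have h3 := mul_le_mul_of_nonneg_left hkey (inv_nonneg.2 hDpos.le)
    have h4 : D⁻¹ * ((Nb + |h₀ p| + ρ*‖p‖) - ρ * D) = (Nb + |h₀ p| + ρ*‖p‖)/D - ρ := by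
      field_simp
    have h5 : (Nb + |h₀ p| + ρ*‖p‖)/D ≤ ρ/2 := by
      rw [div_le_iff₀ hDpos]
      have h6 := (div_le_iff₀ (by linarith : (0:ℝ) < ρ/2)).1 hD2
      linarith
    rw [h4] at h3
    linarith
  -- weak-* cluster point in the double dual
  have henorm : ∀ n, ‖e n‖ ≤ 1 := by
    intro n
    rw [he]
    by_cases h : c n - p = 0
    · simp [h]
    · simp only [norm_smul, norm_inv, norm_norm]
      exact le_of_eq (inv_mul_cancel₀ (norm_ne_zero_iff.2 h))
  set J := inclusionInDoubleDual ℝ X with hJ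
  set ξ : ℕ → WeakDual ℝ (StrongDual ℝ X) := fun n => StrongDual.toWeakDual (J (e n))
    with hξ
  have hξK : ∀ n, ξ n ∈ WeakDual.toStrongDual ⁻¹' closedBall 0 1 := by
    intro n
    simp only [Set.mem_preimage, mem_closedBall, dist_zero_right]
    exact (dist_zero_right (J (e n))).le.trans (le_trans (double_dual_bound ℝ X (e n)) (henorm n))
  obtain ⟨ζ, hζK, hζ⟩ := (WeakDual.isCompact_closedBall (𝕜 := ℝ) 0 1).exists_mapClusterPt
    (f := atTop) (u := ξ)
    (le_principal_iff.2 (Filter.mem_map.2 (Filter.Eventually.of_forall hξK)))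
  obtain ⟨d, hd⟩ := hsurj (WeakDual.toStrongDual ζ)
  have hval : ∀ g : X →L[ℝ] ℝ, MapClusterPt (g d) atTop (fun n => g (e n)) := by
    intro g
    have hcont : Continuous fun η : WeakDual ℝ (StrongDual ℝ X) => η g :=
      WeakDual.eval_continuous g
    have h1 := hζ.continuousAt_comp hcont.continuousAt
    have h2 : ζ g = g d := by
      have : (J d) g = g d := NormedSpace.dual_def ℝ X d g
      rw [← this, hd]
      rfl
    have h3 : ((fun η : WeakDual ℝ (StrongDual ℝ X) => η g) ∘ ξ)
        = fun n => g (e n) := by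
      funext n
      exact NormedSpace.dual_def ℝ X (e n) g
    rw [h2, h3] at h1
    exact h1
  have hfd : f d = 0 := clusterPt_eq_of_tendsto (hval f) hfe
  have hd0 : d ≠ 0 := by
    intro hcontra
    have h1 := clusterPt_le_of_eventually_le (hval h₀) hh₀e
    rw [hcontra] at h1
    simp only [map_zero] at h1
    linarith
  refine ⟨d, hd0, hfd, ?_⟩
  intro t ht
  by_contra hmem
  obtain ⟨g, u₁, hgu₁, hu₁⟩ := geometric_hahn_banach_closed_point hconv hcl hmem
  have hcl1 : MapClusterPt (g p + t * g d) atTop (fun n => g p + t * g (e n)) := by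
    have hcont : Continuous fun r : ℝ => g p + t * r :=
      continuous_const.add (continuous_const.mul continuous_id)
    have := (hval g).continuousAt_comp hcont.continuousAt
    exact this
  have hev : ∀ᶠ n in atTop, g p + t * g (e n) ≤ u₁ := by
    filter_upwards [hdist.eventually_ge_atTop t] with n hn
    have hmemC : p + t • e n ∈ C := secant_mem hconv hp (hc n) ht hn
    have := (hgu₁ _ hmemC).le
    rw [map_add, map_smul, smul_eq_mul] at this
    exact this
  have hle := clusterPt_le_of_eventually_le hcl1 hev
  have heq : g (p + t • d) = g p + t * g d := by rw [map_add, map_smul, smul_eq_mul]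
  rw [heq] at hu₁
  linarith


end Statement7Aux

end Statement7Aux

/-- Let `C` be a nonempty closed convex subset of a real normed space `X` having
the strong separation property, satisfying one of the conditions
(A) `X` is a reflexive Banach space and `Int barc(C) ≠ ∅`,
(B) `C` is locally compact,
(C) `C ⊆ B(0; r) + Z` for some `r > 0` and finite-dimensional subspace `Z`.
Then `barc(C) = Int barc(C) ∪ {0}`. -/
theorem statement7 {X : Type*} [NormedAddCommGroup X] [NormedSpace ℝ X]
    (C : Set X) (hne : C.Nonempty) (hcl : IsClosed C) (hconv : Convex ℝ C)
    (hsep : StrongSepProperty C)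
    (hcond :
      (CompleteSpace X ∧ Function.Surjective (NormedSpace.inclusionInDoubleDual ℝ X) ∧
        (interior (barrierCone C)).Nonempty) ∨
      (∃ c₀ ∈ C, ∃ r > (0 : ℝ), IsCompact (C ∩ Metric.closedBall c₀ r)) ∨
      (∃ r > (0 : ℝ), ∃ Z : Submodule ℝ X, FiniteDimensional ℝ Z ∧
        C ⊆ Metric.ball (0 : X) r + (Z : Set X))) :
    barrierCone C = interior (barrierCone C) ∪ {0} := by
  apply Set.Subset.antisymm
  · intro f hf
    by_cases hf0 : f = 0
    · right; simp [hf0]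
    left
    by_contra hint
    obtain ⟨bb, hbb⟩ := hf
    have hbdd : BddAbove (f '' C) := ⟨bb, by rintro _ ⟨c, hc, rfl⟩; exact hbb c hc⟩
    set s := sSup (f '' C) with hs
    have hub : ∀ c ∈ C, f c ≤ s := fun c hc => le_csSup hbdd ⟨c, hc, rfl⟩
    by_cases hatt : ∃ c ∈ C, f c = s
    case neg =>
      push_neg at hatt
      refine Statement7Aux.branch1 hsep hf0
        (fun c hc => lt_of_le_of_ne (hub c hc) (hatt c hc)) (fun ε hε => ?_)
      obtain ⟨y, ⟨c, hc, rfl⟩, hy⟩ :=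
        exists_lt_of_lt_csSup (hne.image f) (by linarith : s - ε < s)
      exact ⟨c, hc, hy⟩
    case pos =>
      obtain ⟨cs, hcsC, hcs⟩ := hatt
      -- construct the defining sequence from f ∉ interior (barrierCone C)
      rw [mem_interior_iff_mem_nhds, Metric.mem_nhds_iff] at hint
      push_neg at hint
      have hseq : ∀ n : ℕ, ∃ c, c ∈ C ∧ ((n:ℝ)+1) - ‖c‖/((n:ℝ)+1) < f c := by
        intro n
        have hn : (0:ℝ) < (n:ℝ)+1 := by positivity
        obtain ⟨g, hgball, hgnot⟩ := Set.not_subset.1 (hint (((n:ℝ)+1)⁻¹) (by positivity))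
        have hgnot' : ∀ b : ℝ, ∃ c, c ∈ C ∧ b < g c := by
          intro b
          by_contra hcon
          push_neg at hcon
          exact hgnot ⟨b, fun c hc => hcon c hc⟩
        obtain ⟨c, hc, hcgt⟩ := hgnot' ((n:ℝ)+1)
        refine ⟨c, hc, ?_⟩
        have hfg : ‖f - g‖ ≤ ((n:ℝ)+1)⁻¹ := by
          rw [Metric.mem_ball, dist_eq_norm] at hgball
          rw [norm_sub_rev]
          exact hgball.le
        have h1 := (f - g).le_opNorm c
        have h2 : ‖f - g‖ * ‖c‖ ≤ ((n:ℝ)+1)⁻¹ * ‖c‖ :=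
          mul_le_mul_of_nonneg_right hfg (norm_nonneg c)
        rw [ContinuousLinearMap.sub_apply, Real.norm_eq_abs] at h1
        have h3 := abs_le.1 h1
        have h4 : ((n:ℝ)+1)⁻¹ * ‖c‖ = ‖c‖/((n:ℝ)+1) := by
          rw [div_eq_mul_inv, mul_comm]
        linarith [h3.1, h3.2]
      choose cc hccC hccf using hseq
      have hcs_norm : ∀ n : ℕ, ((n:ℝ)+1) * (((n:ℝ)+1) - s) < ‖cc n‖ := by
        intro n
        have h1 := hccf n
        have h2 := hub _ (hccC n)
        have hn : (0:ℝ) < (n:ℝ)+1 := by positivity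
        have h3 : ((n:ℝ)+1) - s < ‖cc n‖/((n:ℝ)+1) := by linarith
        calc ((n:ℝ)+1) * (((n:ℝ)+1) - s) < ((n:ℝ)+1) * (‖cc n‖/((n:ℝ)+1)) :=
              mul_lt_mul_of_pos_left h3 hn
          _ = ‖cc n‖ := by field_simp
      have hnorm_top : Tendsto (fun n => ‖cc n‖) atTop atTop := by
        apply tendsto_atTop_mono' atTop ?_ tendsto_natCast_atTop_atTop
        obtain ⟨m, hm⟩ := exists_nat_ge s
        filter_upwards [eventually_ge_atTop m] with n hn
        have hsn : s ≤ (n:ℝ) := le_trans hm (by exact_mod_cast hn)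
        have := hcs_norm n
        nlinarith [this, hsn]
      have hdistp : ∀ p : X, Tendsto (fun n => ‖cc n - p‖) atTop atTop := by
        intro p
        apply tendsto_atTop_mono' atTop ?_ (tendsto_atTop_add_const_right atTop (-‖p‖) hnorm_top)
        filter_upwards with n
        have := norm_sub_norm_le (cc n) p
        linarith [this]
      have hfep : ∀ p : X, Tendsto (fun n => f (‖cc n - p‖⁻¹ • (cc n - p))) atTop (𝓝 0) :=
        fun p => Statement7Aux.tendsto_f_e p (fun n => hub _ (hccC n)) hccf (hdistp p)
      obtain ⟨d, hd0, hfd, hrec⟩ :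
          ∃ d : X, d ≠ 0 ∧ f d = 0 ∧ ∀ t : ℝ, 0 ≤ t → cs + t • d ∈ C := by
        rcases hcond with ⟨_, hsurj, hibne⟩ | ⟨c₀, hc₀, r, hr, hK⟩ | ⟨r, hr, Z, hZfin, hCZ⟩
        · obtain ⟨g₀, hg₀⟩ := hibne
          rw [mem_interior_iff_mem_nhds, Metric.mem_nhds_iff] at hg₀
          obtain ⟨ε, hε, hball⟩ := hg₀
          exact Statement7Aux.dir_of_reflexive hcl hconv hsurj hε hball hcsC hccC
            (hdistp cs) (hfep cs)
        · obtain ⟨d, hd1, ψ, hψ, hlim⟩ :=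
            Statement7Aux.subseq_of_locallyCompact hconv hc₀ hr hK hccC (hdistp c₀)
          have hd0 : d ≠ 0 := by
            intro h
            rw [h, norm_zero] at hd1
            exact one_ne_zero hd1.symm
          have hfd : f d = 0 := by
            have h1 : Tendsto (fun m => f (‖cc (ψ m) - c₀‖⁻¹ • (cc (ψ m) - c₀))) atTop
                (𝓝 (f d)) := (f.continuous.tendsto d).comp hlim
            have h2 : Tendsto (fun m => f (‖cc (ψ m) - c₀‖⁻¹ • (cc (ψ m) - c₀))) atTop
                (𝓝 0) := (hfep c₀).comp hψ.tendsto_atTop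
            exact tendsto_nhds_unique h1 h2
          have hrec0 := Statement7Aux.dir_of_subseq hcl hconv hc₀ hccC (hdistp c₀) hψ hlim
          exact ⟨d, hd0, hfd, fun t ht =>
            Statement7Aux.recession_transfer hcl hconv hrec0 hcsC ht⟩
        · haveI := hZfin
          obtain ⟨d, hd1, ψ, hψ, hlim⟩ :=
            Statement7Aux.subseq_of_findim hr Z hCZ cs hccC (hdistp cs)
          have hd0 : d ≠ 0 := by
            intro h
            rw [h, norm_zero] at hd1
            exact one_ne_zero hd1.symm
          have hfd : f d = 0 := by
            have h1 : Tendsto (fun m => f (‖cc (ψ m) - cs‖⁻¹ • (cc (ψ m) - cs))) atTop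
                (𝓝 (f d)) := (f.continuous.tendsto d).comp hlim
            have h2 : Tendsto (fun m => f (‖cc (ψ m) - cs‖⁻¹ • (cc (ψ m) - cs))) atTop
                (𝓝 0) := (hfep cs).comp hψ.tendsto_atTop
            exact tendsto_nhds_unique h1 h2
          exact ⟨d, hd0, hfd,
            Statement7Aux.dir_of_subseq hcl hconv hcsC hccC (hdistp cs) hψ hlim⟩
      exact Statement7Aux.branch2 hcl hconv hsep hf0 hcsC
        (fun c hc => by rw [hcs]; exact hub c hc) hd0 hfd hrec
  · rintro f (hf | hf)
    · exact interior_subset hf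
    · rw [Set.mem_singleton_iff] at hf
      subst hf
      exact ⟨0, fun c _ => by simp⟩
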